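/- arXiv:1812.00731 — 6 statements merged into one kernel-verified Lean document; each statement's English description precedes it below -/
import Mathlib

section
/- The function d_E(u,v) = ‖u ∧ v‖ / (‖u‖·‖v‖) on the complex projective plane, where ‖u ∧ v‖ is the norm induced by the Hermitian inner product on the second exterior power of ℂ³, satisfies the triangle inequality: d_E(u,w) ≤ d_E(u,v) + d_E(v,w) for all nonzero u, v, w ∈ ℂ³. -/
open scoped ComplexConjugate

section InnerLemmas
variable {𝕜 : Type*} [RCLike 𝕜] {F : Type*} [NormedAddCommGroup F] [InnerProductSpace 𝕜 F]

local notation "⟪" x ", " y "⟫" => @inner 𝕜 _ _ x y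

lemma inner_ortho (v u w : F) :
    ⟪⟪v,v⟫ • u - ⟪v,u⟫ • v, ⟪v,v⟫ • w - ⟪v,w⟫ • v⟫
      = ⟪v,v⟫ * (⟪v,v⟫ * ⟪u,w⟫ - ⟪u,v⟫ * ⟪v,w⟫) := by
  simp only [inner_sub_left, inner_sub_right, inner_smul_left, inner_smul_right,
    inner_conj_symm]
  ring

set_option maxHeartbeats 1000000 in
lemma norm_ortho (v u : F) :
    ‖(⟪v,v⟫ • u - ⟪v,u⟫ • v : F)‖^2 = ‖v‖^2 * (‖v‖^2 * ‖u‖^2 - ‖⟪u,v⟫‖^2) := by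
  have h : ((‖(⟪v,v⟫ • u - ⟪v,u⟫ • v : F)‖ : 𝕜))^2
      = ((‖v‖^2 * (‖v‖^2 * ‖u‖^2 - ‖⟪u,v⟫‖^2) : ℝ) : 𝕜) := by
    calc ((‖(⟪v,v⟫ • u - ⟪v,u⟫ • v : F)‖ : 𝕜))^2
        = ⟪⟪v,v⟫ • u - ⟪v,u⟫ • v, ⟪v,v⟫ • u - ⟪v,u⟫ • v⟫ :=
          (inner_self_eq_norm_sq_to_K _).symm
      _ = ⟪v,v⟫ * (⟪v,v⟫ * ⟪u,u⟫ - ⟪u,v⟫ * ⟪v,u⟫) := inner_ortho v u u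
      _ = ((‖v‖^2 * (‖v‖^2 * ‖u‖^2 - ‖⟪u,v⟫‖^2) : ℝ) : 𝕜) := by
          rw [show ⟪v,u⟫ = conj ⟪u,v⟫ from (inner_conj_symm v u).symm, RCLike.mul_conj,
            inner_self_eq_norm_sq_to_K (𝕜 := 𝕜) v, inner_self_eq_norm_sq_to_K (𝕜 := 𝕜) u]
          push_cast
          ring
  exact_mod_cast h

set_option maxHeartbeats 1000000 in
lemma cs3 (u v w : F) :
    ‖⟪u,v⟫‖ * ‖⟪v,w⟫‖ -
      Real.sqrt (‖v‖^2*‖u‖^2 - ‖⟪u,v⟫‖^2) * Real.sqrt (‖v‖^2*‖w‖^2 - ‖⟪v,w⟫‖^2)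
      ≤ ‖⟪u,w⟫‖ * ‖v‖^2 := by
  by_cases hv : v = 0
  · simp [hv, Real.sqrt_nonneg, mul_nonneg]
  have hvpos : (0:ℝ) < ‖v‖ := norm_pos_iff.mpr hv
  set u₁ : F := ⟪v,v⟫ • u - ⟪v,u⟫ • v with hu₁
  set w₁ : F := ⟪v,v⟫ • w - ⟪v,w⟫ • v with hw₁
  have hcs := norm_inner_le_norm (𝕜 := 𝕜) u₁ w₁
  have h1 : ‖⟪u₁,w₁⟫‖ = ‖v‖^2 * ‖(⟪v,v⟫ * ⟪u,w⟫ - ⟪u,v⟫ * ⟪v,w⟫ : 𝕜)‖ := by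
    rw [hu₁, hw₁, inner_ortho, norm_mul, inner_self_eq_norm_sq_to_K (𝕜 := 𝕜) v]
    simp [abs_of_nonneg (norm_nonneg v)]
  have h2 : ‖u₁‖ = ‖v‖ * Real.sqrt (‖v‖^2 * ‖u‖^2 - ‖⟪u,v⟫‖^2) := by
    rw [← Real.sqrt_sq (norm_nonneg u₁), hu₁, norm_ortho,
      Real.sqrt_mul (sq_nonneg ‖v‖), Real.sqrt_sq (norm_nonneg v)]
  have h3 : ‖w₁‖ = ‖v‖ * Real.sqrt (‖v‖^2 * ‖w‖^2 - ‖⟪v,w⟫‖^2) := by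
    rw [← Real.sqrt_sq (norm_nonneg w₁), hw₁, norm_ortho,
      Real.sqrt_mul (sq_nonneg ‖v‖), Real.sqrt_sq (norm_nonneg v), norm_inner_symm]
  rw [h1, h2, h3] at hcs
  have hD : ‖⟪u,v⟫ * ⟪v,w⟫‖ - ‖⟪v,v⟫ * ⟪u,w⟫‖
      ≤ ‖(⟪v,v⟫ * ⟪u,w⟫ - ⟪u,v⟫ * ⟪v,w⟫ : 𝕜)‖ := by
    rw [norm_sub_rev]
    exact norm_sub_norm_le _ _
  have hvv : ‖(⟪v,v⟫ : 𝕜)‖ = ‖v‖^2 := by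
    rw [inner_self_eq_norm_sq_to_K (𝕜 := 𝕜) v]
    simp [abs_of_nonneg (norm_nonneg v)]
  rw [norm_mul, norm_mul, hvv] at hD
  have hdiv : ‖(⟪v,v⟫ * ⟪u,w⟫ - ⟪u,v⟫ * ⟪v,w⟫ : 𝕜)‖
      ≤ Real.sqrt (‖v‖^2 * ‖u‖^2 - ‖⟪u,v⟫‖^2) * Real.sqrt (‖v‖^2 * ‖w‖^2 - ‖⟪v,w⟫‖^2) := by
    have h4 : ‖v‖ * ‖v‖ > 0 := mul_pos hvpos hvpos
    nlinarith [hcs]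
  linarith

end InnerLemmas

set_option maxHeartbeats 2000000 in
lemma key_real (X Y Z p q r S1 S2 S3 : ℝ)
    (hX : 0 < X) (hY : 0 < Y) (hZ : 0 < Z)
    (hp : 0 ≤ p) (hq : 0 ≤ q) (hr : 0 ≤ r)
    (hpb : p ≤ X*Y) (hqb : q ≤ Y*Z) (hrb : r ≤ X*Z)
    (hS1 : S1 = Real.sqrt (Y^2*X^2 - p^2)) (hS2 : S2 = Real.sqrt (Y^2*Z^2 - q^2))
    (hS3 : S3 = Real.sqrt (X^2*Z^2 - r^2))
    (hkey : p*q - S1*S2 ≤ r*Y^2) :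
    S3 * Y ≤ S1 * Z + S2 * X := by
  have hA1 : (0:ℝ) ≤ Y^2*X^2 - p^2 := by nlinarith
  have hA2 : (0:ℝ) ≤ Y^2*Z^2 - q^2 := by nlinarith
  have hA3 : (0:ℝ) ≤ X^2*Z^2 - r^2 := by nlinarith
  have hS1n : 0 ≤ S1 := hS1 ▸ Real.sqrt_nonneg _
  have hS2n : 0 ≤ S2 := hS2 ▸ Real.sqrt_nonneg _
  have hS3n : 0 ≤ S3 := hS3 ▸ Real.sqrt_nonneg _
  have hE1 : S1^2 = Y^2*X^2 - p^2 := by rw [hS1, Real.sq_sqrt hA1]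
  have hE2 : S2^2 = Y^2*Z^2 - q^2 := by rw [hS2, Real.sq_sqrt hA2]
  have hE3 : S3^2 = X^2*Z^2 - r^2 := by rw [hS3, Real.sq_sqrt hA3]
  have hsq : (S3*Y)^2 ≤ (S1*Z + S2*X)^2 := by
    rcases le_or_gt 0 (p*q - S1*S2) with hc | hc
    · -- p*q - S1*S2 is a nonneg lower bound for r*Y^2, so we may square it
      have h5 : (p*q - S1*S2)^2 ≤ (r*Y^2)^2 := by nlinarith
      have hf : 0 ≤ S1*S2*(X*Z*Y^2 - p*q) := by
        apply mul_nonneg (mul_nonneg hS1n hS2n)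
        nlinarith [mul_le_mul hpb hqb hq (by positivity : (0:ℝ) ≤ X*Y)]
      have hid : Y^2*((S1*Z+S2*X)^2 - (S3*Y)^2)
          = ((r*Y^2)^2 - (p*q - S1*S2)^2) + 2*S1*S2*(X*Z*Y^2 - p*q) + 2*S1^2*S2^2 := by
        linear_combination (Y^2*Z^2 - S2^2) * hE1 + p^2 * hE2 + (-(Y^4)) * hE3
      have hY2G : 0 ≤ Y^2*((S1*Z+S2*X)^2 - (S3*Y)^2) := by
        rw [hid]
        have : 0 ≤ S1^2*S2^2 := by positivity
        linarith
      nlinarith [hY2G, sq_nonneg Y, mul_pos hY hY]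
    · have h41 : p*Z ≤ X*Y*Z := by nlinarith
      have h42 : q*X ≤ X*Y*Z := by nlinarith
      have h43 : 0 ≤ p*Z := mul_nonneg hp hZ.le
      have h44 : 0 ≤ q*X := mul_nonneg hq hX.le
      have e1 : 0 ≤ (X*Y*Z - (p*Z - q*X)) * (X*Y*Z + (p*Z - q*X)) :=
        mul_nonneg (by linarith) (by linarith)
      have e1' : 0 ≤ (X*Y*Z)^2 - (p*Z - q*X)^2 := by nlinarith [e1]
      have hf : 0 ≤ 2*X*Z*(S1*S2 - p*q) := by
        apply mul_nonneg (by positivity)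
        linarith
      have hid2 : (S1*Z+S2*X)^2 - (S3*Y)^2
          = ((X*Y*Z)^2 - (p*Z - q*X)^2) + 2*X*Z*(S1*S2 - p*q) + (r*Y)^2 := by
        linear_combination Z^2 * hE1 + X^2 * hE2 + (-(Y^2)) * hE3
      nlinarith [e1', hf, sq_nonneg (r*Y), hid2]
  have hmono := Real.sqrt_le_sqrt hsq
  rwa [Real.sqrt_sq (mul_nonneg hS3n hY.le),
    Real.sqrt_sq (by positivity)] at hmono

open scoped ComplexConjugate

/-- Standard Hermitian inner product on ℂ³ : `u · v = ∑ uᵢ conj(vᵢ)`. -/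
noncomputable def cdot (u v : Fin 3 → ℂ) : ℂ := ∑ i, u i * conj (v i)

/-- Hermitian norm on ℂ³. -/
noncomputable def hnorm (u : Fin 3 → ℂ) : ℝ := Real.sqrt (cdot u u).re

/-- Squared norm of `u ∧ v` in Λ²ℂ³ for the induced Hermitian product:
`(u∧v)·(u∧v) = (u·u)(v·v) − (u·v)(v·u)`. -/
noncomputable def wedgeSq (u v : Fin 3 → ℂ) : ℝ :=
  (cdot u u * cdot v v - cdot u v * cdot v u).re

/-- Norm of `u ∧ v`. -/
noncomputable def wedgeNorm (u v : Fin 3 → ℂ) : ℝ := Real.sqrt (wedgeSq u v)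

/-- The distance `d_E(u,v) = ‖u ∧ v‖ / (‖u‖ ‖v‖)` on the projective plane. -/
noncomputable def dE (u v : Fin 3 → ℂ) : ℝ := wedgeNorm u v / (hnorm u * hnorm v)

noncomputable def toE (u : Fin 3 → ℂ) : EuclideanSpace ℂ (Fin 3) :=
  (WithLp.equiv 2 (Fin 3 → ℂ)).symm u

lemma toE_eq_zero {u : Fin 3 → ℂ} : toE u = 0 ↔ u = 0 := WithLp.toLp_eq_zero (p := 2)

lemma cdot_inner (u v : Fin 3 → ℂ) : cdot u v = (inner ℂ (toE v) (toE u) : ℂ) := by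
  simp only [cdot, toE, PiLp.inner_apply, RCLike.inner_apply, WithLp.equiv_symm_apply, PiLp.toLp_apply]

lemma hnorm_eq (u : Fin 3 → ℂ) : hnorm u = ‖toE u‖ := by
  rw [hnorm, cdot_inner,
    show ((inner ℂ (toE u) (toE u) : ℂ)).re = RCLike.re (K := ℂ) (inner ℂ (toE u) (toE u)) from rfl,
    inner_self_eq_norm_sq]
  exact Real.sqrt_sq (norm_nonneg _)

lemma wedgeSq_eq (u v : Fin 3 → ℂ) :
    wedgeSq u v = ‖toE u‖^2 * ‖toE v‖^2 - ‖(inner ℂ (toE u) (toE v) : ℂ)‖^2 := by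
  rw [wedgeSq, cdot_inner, cdot_inner, cdot_inner, cdot_inner]
  have h : (inner ℂ (toE u) (toE u) : ℂ) * (inner ℂ (toE v) (toE v) : ℂ)
        - (inner ℂ (toE v) (toE u) : ℂ) * (inner ℂ (toE u) (toE v) : ℂ)
      = (RCLike.ofReal (‖toE u‖^2 * ‖toE v‖^2 - ‖(inner ℂ (toE u) (toE v) : ℂ)‖^2) : ℂ) := by
    rw [inner_self_eq_norm_sq_to_K, inner_self_eq_norm_sq_to_K,
      show (inner ℂ (toE v) (toE u) : ℂ) = conj (inner ℂ (toE u) (toE v) : ℂ) from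
        (inner_conj_symm _ _).symm,
      RCLike.conj_mul]
    push_cast
    ring
  rw [h, show (RCLike.ofReal (‖toE u‖^2 * ‖toE v‖^2 - ‖(inner ℂ (toE u) (toE v) : ℂ)‖^2) : ℂ).re
      = RCLike.re (K := ℂ) (RCLike.ofReal
        (‖toE u‖^2 * ‖toE v‖^2 - ‖(inner ℂ (toE u) (toE v) : ℂ)‖^2)) from rfl,
    RCLike.ofReal_re]

/-- `d_E` satisfies the triangle inequality on nonzero vectors. -/
theorem dE_triangle (u v w : Fin 3 → ℂ) (hu : u ≠ 0) (hv : v ≠ 0) (hw : w ≠ 0) :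
    dE u w ≤ dE u v + dE v w := by
  have hx : (0:ℝ) < ‖toE u‖ := norm_pos_iff.mpr (fun h => hu (toE_eq_zero.mp h))
  have hy : (0:ℝ) < ‖toE v‖ := norm_pos_iff.mpr (fun h => hv (toE_eq_zero.mp h))
  have hz : (0:ℝ) < ‖toE w‖ := norm_pos_iff.mpr (fun h => hw (toE_eq_zero.mp h))
  set x := ‖toE u‖
  set y := ‖toE v‖
  set z := ‖toE w‖
  set p := ‖(inner ℂ (toE u) (toE v) : ℂ)‖ with hpdef
  set q := ‖(inner ℂ (toE v) (toE w) : ℂ)‖ with hqdef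
  set r := ‖(inner ℂ (toE u) (toE w) : ℂ)‖ with hrdef
  have hS1 : wedgeNorm u v = Real.sqrt (y^2*x^2 - p^2) := by
    rw [wedgeNorm, wedgeSq_eq]; congr 1; ring
  have hS2 : wedgeNorm v w = Real.sqrt (y^2*z^2 - q^2) := by
    rw [wedgeNorm, wedgeSq_eq]
  have hS3 : wedgeNorm u w = Real.sqrt (x^2*z^2 - r^2) := by
    rw [wedgeNorm, wedgeSq_eq]
  have hkey : p*q - wedgeNorm u v * wedgeNorm v w ≤ r*y^2 := by
    rw [hS1, hS2]
    exact cs3 (toE u) (toE v) (toE w)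
  have hmain := key_real x y z p q r (wedgeNorm u v) (wedgeNorm v w) (wedgeNorm u w)
    hx hy hz (norm_nonneg _) (norm_nonneg _) (norm_nonneg _)
    (norm_inner_le_norm _ _) (norm_inner_le_norm _ _) (norm_inner_le_norm _ _)
    hS1 hS2 hS3 hkey
  rw [dE, dE, dE, hnorm_eq, hnorm_eq, hnorm_eq,
    div_add_div _ _ (by positivity) (by positivity),
    div_le_div_iff₀ (by positivity) (by positivity)]
  nlinarith [mul_le_mul_of_nonneg_right hmain (by positivity : (0:ℝ) ≤ x*y*z)]
end

section
/- There is a constant C < ∞ such that for all 0 < r ≤ 1 and all u, v ∈ ℂ, |η_u(B(0,r)) − η_v(B(0,r))| ≤ C·|u−v|^{1/2}, where η_u is the Lebesgue measure on the vertical line {u}×ℝ and B(0,r) is the Korányi ball of radius r in the Heisenberg group. -/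
open MeasureTheory

/-- For `u ∈ ℂ`, `ηu B(0,r)` is the Lebesgue measure of the intersection of the vertical
line `{u} × ℝ` with the Korányi ball `B(0,r) = {(z,t) : |z|⁴ + 4t² ≤ r⁴}`. -/
noncomputable def etaBall (u : ℂ) (r : ℝ) : ℝ :=
  (volume {t : ℝ | ‖u‖ ^ 4 + 4 * t ^ 2 ≤ r ^ 4}).toReal

lemma etaBall_eq (u : ℂ) (r : ℝ) :
    etaBall u r = Real.sqrt (r ^ 4 - ‖u‖ ^ 4) := by
  set c : ℝ := (r ^ 4 - ‖u‖ ^ 4) / 4 with hc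
  have hset : {t : ℝ | ‖u‖ ^ 4 + 4 * t ^ 2 ≤ r ^ 4} = {t : ℝ | t ^ 2 ≤ c} := by
    ext t; simp only [Set.mem_setOf_eq, hc]; constructor <;> intro h <;> linarith
  rcases le_or_gt 0 c with h0 | h0
  · have hIcc : {t : ℝ | t ^ 2 ≤ c} = Set.Icc (-Real.sqrt c) (Real.sqrt c) := by
      ext t
      simp only [Set.mem_setOf_eq, Set.mem_Icc, ← abs_le]
      constructor
      · intro h
        have := Real.sqrt_le_sqrt h
        rwa [Real.sqrt_sq_eq_abs] at this
      · intro h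
        calc t ^ 2 = |t| ^ 2 := (sq_abs t).symm
        _ ≤ Real.sqrt c ^ 2 := by
            apply pow_le_pow_left₀ (abs_nonneg t) h
        _ = c := Real.sq_sqrt h0
    have h2 : Real.sqrt (r ^ 4 - ‖u‖ ^ 4) = 2 * Real.sqrt c := by
      rw [show r ^ 4 - ‖u‖ ^ 4 = 4 * c by rw [hc]; ring,
        show (4 : ℝ) = 2 ^ 2 by norm_num, Real.sqrt_mul (by positivity),
        Real.sqrt_sq (by norm_num : (0:ℝ) ≤ 2)]
    rw [etaBall, hset, hIcc, Real.volume_Icc, h2]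
    rw [ENNReal.toReal_ofReal (by nlinarith [Real.sqrt_nonneg c])]
    ring
  · have hempty : {t : ℝ | t ^ 2 ≤ c} = ∅ := by
      ext t; simp only [Set.mem_setOf_eq, Set.mem_empty_iff_false, iff_false]
      nlinarith [sq_nonneg t]
    have hcneg : r ^ 4 - ‖u‖ ^ 4 < 0 := by
      rw [hc] at h0; linarith
    rw [etaBall, hset, hempty, measure_empty,
      Real.sqrt_eq_zero_of_nonpos hcneg.le]
    simp

lemma etaBall_eq_min (u : ℂ) (r : ℝ) (hr : 0 ≤ r) :
    etaBall u r = Real.sqrt (r ^ 4 - (min (‖u‖) r) ^ 4) := by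
  rw [etaBall_eq]
  rcases le_total (‖u‖) r with h | h
  · rw [min_eq_left h]
  · rw [min_eq_right h]
    have h1 : r ^ 4 ≤ ‖u‖ ^ 4 := pow_le_pow_left₀ hr h 4
    rw [Real.sqrt_eq_zero_of_nonpos (by linarith)]
    simp

lemma sqrt_sub_sqrt_le (a b : ℝ) (hb : 0 ≤ b) (hab : b ≤ a) :
    Real.sqrt a - Real.sqrt b ≤ Real.sqrt (a - b) := by
  have h3 : Real.sqrt a ≤ Real.sqrt b + Real.sqrt (a - b) := by
    have hnn : 0 ≤ Real.sqrt b + Real.sqrt (a - b) := by positivity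
    have h4 : a ≤ (Real.sqrt b + Real.sqrt (a - b)) ^ 2 := by
      nlinarith [Real.sqrt_nonneg b, Real.sqrt_nonneg (a - b), Real.sq_sqrt hb,
        Real.sq_sqrt (sub_nonneg.2 hab), mul_nonneg (Real.sqrt_nonneg b) (Real.sqrt_nonneg (a - b))]
    calc Real.sqrt a ≤ Real.sqrt ((Real.sqrt b + Real.sqrt (a - b)) ^ 2) := Real.sqrt_le_sqrt h4
      _ = _ := Real.sqrt_sq hnn
  linarith

lemma abs_sqrt_sub_sqrt (a b : ℝ) (ha : 0 ≤ a) (hb : 0 ≤ b) :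
    |Real.sqrt a - Real.sqrt b| ≤ Real.sqrt |a - b| := by
  rcases le_total b a with h | h
  · rw [abs_of_nonneg (by linarith [Real.sqrt_le_sqrt h] : (0:ℝ) ≤ Real.sqrt a - Real.sqrt b),
      abs_of_nonneg (by linarith)]
    exact sqrt_sub_sqrt_le a b hb h
  · rw [abs_of_nonpos (by linarith [Real.sqrt_le_sqrt h] : Real.sqrt a - Real.sqrt b ≤ 0),
      abs_of_nonpos (by linarith)]
    have := sqrt_sub_sqrt_le b a ha h
    rw [show -(a - b) = b - a by ring, show -(Real.sqrt a - Real.sqrt b)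
      = Real.sqrt b - Real.sqrt a by ring]
    exact this

/-- There is a constant `C < ∞` such that for all `0 < r ≤ 1` and all `u, v ∈ ℂ`,
`|η_u(B(0,r)) − η_v(B(0,r))| ≤ C·|u−v|^{1/2}`. -/
theorem eta_ball_holder :
    ∃ C : ℝ, 0 < C ∧ ∀ r : ℝ, 0 < r → r ≤ 1 → ∀ u v : ℂ,
      |etaBall u r - etaBall v r| ≤ C * ‖u - v‖ ^ ((1 : ℝ) / 2) := by
  refine ⟨2, by norm_num, fun r hr hr1 u v => ?_⟩
  set m := min (‖u‖) r with hm
  set n := min (‖v‖) r with hn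
  have hm0 : 0 ≤ m := le_min (norm_nonneg u) hr.le
  have hn0 : 0 ≤ n := le_min (norm_nonneg v) hr.le
  have hm1 : m ≤ 1 := le_trans (min_le_right _ _) hr1
  have hn1 : n ≤ 1 := le_trans (min_le_right _ _) hr1
  have hmr : m ≤ r := min_le_right _ _
  have hnr : n ≤ r := min_le_right _ _
  have hmn : |m - n| ≤ ‖u - v‖ := by
    have h1 : |‖u‖ - ‖v‖| ≤ ‖u - v‖ :=
      abs_norm_sub_norm_le u v
    have h2 : |m - n| ≤ |‖u‖ - ‖v‖| := by
      have hb := abs_le.1 (le_refl |‖u‖ - ‖v‖|)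
      rcases le_total (‖u‖) r with h | h <;>
        rcases le_total (‖v‖) r with h' | h' <;>
        rw [hm, hn] <;>
        [rw [min_eq_left h, min_eq_left h']; rw [min_eq_left h, min_eq_right h'];
         rw [min_eq_right h, min_eq_left h']; rw [min_eq_right h, min_eq_right h']] <;>
        rw [abs_le] <;> constructor <;> cases' hb with l1 l2 <;> linarith
    linarith
  have key : |m ^ 4 - n ^ 4| ≤ 4 * |m - n| := by
    have hfac : ∀ x y : ℝ, x ^ 4 - y ^ 4 = (x - y) * ((x + y) * (x ^ 2 + y ^ 2)) := by
      intro x y; ring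
    rcases le_total n m with h | h
    · have h4 : 0 ≤ (m + n) * (m ^ 2 + n ^ 2) := by positivity
      have h5 : (m + n) * (m ^ 2 + n ^ 2) ≤ 4 := by nlinarith
      rw [abs_of_nonneg (by rw [hfac]; exact mul_nonneg (by linarith) h4),
        abs_of_nonneg (by linarith), hfac]
      nlinarith [sub_nonneg.2 h]
    · have h4 : 0 ≤ (n + m) * (n ^ 2 + m ^ 2) := by positivity
      have h5 : (n + m) * (n ^ 2 + m ^ 2) ≤ 4 := by nlinarith
      rw [abs_sub_comm, abs_sub_comm m n,
        abs_of_nonneg (by rw [hfac]; exact mul_nonneg (by linarith) h4),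
        abs_of_nonneg (by linarith), hfac]
      nlinarith [sub_nonneg.2 h]
  rw [etaBall_eq_min u r hr.le, etaBall_eq_min v r hr.le]
  have hrm4 : (0:ℝ) ≤ r ^ 4 - m ^ 4 := sub_nonneg.2 (pow_le_pow_left₀ hm0 hmr 4)
  have hrn4 : (0:ℝ) ≤ r ^ 4 - n ^ 4 := sub_nonneg.2 (pow_le_pow_left₀ hn0 hnr 4)
  calc |Real.sqrt (r ^ 4 - m ^ 4) - Real.sqrt (r ^ 4 - n ^ 4)|
      ≤ Real.sqrt |(r ^ 4 - m ^ 4) - (r ^ 4 - n ^ 4)| :=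
        abs_sqrt_sub_sqrt _ _ hrm4 hrn4
    _ = Real.sqrt |m ^ 4 - n ^ 4| := by rw [show (r ^ 4 - m ^ 4) - (r ^ 4 - n ^ 4)
          = -(m ^ 4 - n ^ 4) by ring, abs_neg]
    _ ≤ Real.sqrt (4 * ‖u - v‖) := by
        apply Real.sqrt_le_sqrt
        calc |m ^ 4 - n ^ 4| ≤ 4 * |m - n| := key
          _ ≤ 4 * ‖u - v‖ := by linarith
    _ = 2 * Real.sqrt (‖u - v‖) := by
        rw [show (4:ℝ) = 2 ^ 2 by norm_num, Real.sqrt_mul (by positivity),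
          Real.sqrt_sq (by norm_num : (0:ℝ) ≤ 2)]
    _ = 2 * ‖u - v‖ ^ ((1:ℝ)/2) := by rw [Real.sqrt_eq_rpow]
end

section
/- There exist constants c, C > 0 such that for all 0 < δ ≤ r ≤ 0.001 and all z ∈ ℂ, the 1-dimensional Hausdorff measure (arc length) of the intersection of the unit circle S¹ ⊂ ℂ with the annulus A(z,r,δ) = {w ∈ ℂ : r ≤ |w−z| ≤ r+δ} is at most C·δ^{1/2}. -/
open MeasureTheory
open scoped ENNReal

private lemma cos_diff_lower {θ₁ θ₂ : ℝ} (h1 : 0 ≤ θ₁) (h12 : θ₁ ≤ θ₂) (h2 : θ₂ ≤ Real.pi) :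
    2 * (θ₂ - θ₁)^2 / Real.pi^2 ≤ Real.cos θ₁ - Real.cos θ₂ := by
  have hπ := Real.pi_pos
  set u := (θ₂ - θ₁) / 2 with hu
  set v := (θ₁ + θ₂) / 2 with hv
  have hu0 : 0 ≤ u := by simp only [hu]; linarith
  have huπ : u ≤ Real.pi / 2 := by simp only [hu]; linarith
  have hsinu : 2 / Real.pi * u ≤ Real.sin u := Real.mul_le_sin hu0 huπ
  have h2π : (0:ℝ) ≤ 2 / Real.pi := by positivity
  have hsinv : 2 / Real.pi * u ≤ Real.sin v := by
    rcases le_or_gt v (Real.pi / 2) with hc | hc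
    · calc 2 / Real.pi * u ≤ 2 / Real.pi * v := by
            have huv : u ≤ v := by simp only [hu, hv]; linarith
            nlinarith
        _ ≤ Real.sin v := Real.mul_le_sin (by simp only [hv]; linarith) hc
    · have h3 : 2 / Real.pi * u ≤ Real.sin (Real.pi - v) := by
        refine le_trans ?_ (Real.mul_le_sin (by simp only [hv]; linarith) (by linarith))
        have h1' : u ≤ Real.pi - v := by simp only [hu, hv]; linarith
        nlinarith
      rwa [Real.sin_pi_sub] at h3
  have hcc : Real.cos θ₁ - Real.cos θ₂ = 2 * Real.sin v * Real.sin u := by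
    rw [Real.cos_sub_cos]
    have he : (θ₁ - θ₂) / 2 = -u := by simp only [hu]; ring
    rw [he, Real.sin_neg]
    simp only [hv]; ring
  have h2u : (0:ℝ) ≤ 2 / Real.pi * u := by positivity
  calc 2 * (θ₂ - θ₁)^2 / Real.pi^2 = 2 * ((2 / Real.pi * u) * (2 / Real.pi * u)) := by
        field_simp [hu]; ring
    _ ≤ 2 * (Real.sin v * Real.sin u) := by nlinarith
    _ = Real.cos θ₁ - Real.cos θ₂ := by rw [hcc]; ring

private lemma vol_cos_band (a b : ℝ) :
    volume {θ : ℝ | θ ∈ Set.Icc (-Real.pi) Real.pi ∧ Real.cos θ ∈ Set.Icc a b}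
      ≤ ENNReal.ofReal (4 * (Real.pi * Real.sqrt ((b - a) / 2))) := by
  set U := {θ : ℝ | θ ∈ Set.Icc (-Real.pi) Real.pi ∧ Real.cos θ ∈ Set.Icc a b} with hU
  rcases Set.eq_empty_or_nonempty U with h | ⟨θ₀, hθ₀⟩
  · rw [h]; simp
  set D := Real.pi * Real.sqrt ((b - a) / 2) with hD
  have hπ := Real.pi_pos
  have hab : a ≤ b := le_trans hθ₀.2.1 hθ₀.2.2
  have hD0 : 0 ≤ D := by positivity
  have main : ∀ θ₁ θ₂, θ₁ ∈ U → θ₂ ∈ U → 0 ≤ θ₁ → θ₁ ≤ θ₂ → θ₂ - θ₁ ≤ D := by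
    intro θ₁ θ₂ h₁ h₂ h0 h12
    have hle := cos_diff_lower h0 h12 h₂.1.2
    have hsq : (θ₂ - θ₁)^2 ≤ Real.pi^2 * ((b - a)/2) := by
      have hba : Real.cos θ₁ - Real.cos θ₂ ≤ b - a := by
        have := h₁.2.2; have := h₂.2.1; linarith
      have h2 : 2 * (θ₂ - θ₁)^2 / Real.pi^2 ≤ b - a := le_trans hle hba
      rw [div_le_iff₀ (by positivity)] at h2
      nlinarith
    have hres : θ₂ - θ₁ ≤ Real.sqrt (Real.pi^2 * ((b - a)/2)) :=
      Real.le_sqrt_of_sq_le hsq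
    rwa [Real.sqrt_mul (by positivity), Real.sqrt_sq hπ.le] at hres
  have key : ∀ θ₁ θ₂, θ₁ ∈ U → θ₂ ∈ U → 0 ≤ θ₁ → 0 ≤ θ₂ → |θ₁ - θ₂| ≤ D := by
    intro θ₁ θ₂ h₁ h₂ g₁ g₂
    rcases le_total θ₁ θ₂ with h | h
    · rw [abs_sub_comm, abs_of_nonneg (by linarith)]; exact main _ _ h₁ h₂ g₁ h
    · rw [abs_of_nonneg (by linarith)]; exact main _ _ h₂ h₁ g₂ h
  have habs : ∀ θ, θ ∈ U → |θ| ∈ U := by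
    intro θ hθ
    rcases abs_cases θ with ⟨h, _⟩ | ⟨h, _⟩
    · rwa [h]
    · rw [h]
      exact ⟨⟨by linarith [hθ.1.2], by linarith [hθ.1.1]⟩,
        by rw [Real.cos_neg]; exact hθ.2⟩
  have hsub : U ⊆ Set.Icc (|θ₀| - D) (|θ₀| + D) ∪ Set.Icc (-|θ₀| - D) (-|θ₀| + D) := by
    intro θ hθ
    have h1 := key _ _ (habs _ hθ) (habs _ hθ₀) (abs_nonneg _) (abs_nonneg _)
    rw [abs_le] at h1
    rcases abs_cases θ with ⟨h, _⟩ | ⟨h, _⟩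
    · left; exact ⟨by linarith [h1.1], by linarith [h1.2]⟩
    · right; exact ⟨by linarith [h1.2], by linarith [h1.1]⟩
  calc volume U ≤ volume (Set.Icc (|θ₀| - D) (|θ₀| + D) ∪ Set.Icc (-|θ₀| - D) (-|θ₀| + D)) :=
        measure_mono hsub
    _ ≤ volume (Set.Icc (|θ₀| - D) (|θ₀| + D)) + volume (Set.Icc (-|θ₀| - D) (-|θ₀| + D)) :=
        measure_union_le _ _
    _ = ENNReal.ofReal (2*D) + ENNReal.ofReal (2*D) := by
        rw [Real.volume_Icc, Real.volume_Icc]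
        have e1 : |θ₀| + D - (|θ₀| - D) = 2*D := by ring
        have e2 : -|θ₀| + D - (-|θ₀| - D) = 2*D := by ring
        rw [e1, e2]
    _ = ENNReal.ofReal (4 * D) := by
        rw [← ENNReal.ofReal_add (by positivity) (by positivity)]
        congr 1; ring

/-- There exists a constant `C > 0` such that for all `0 < δ ≤ r ≤ 0.001` and all `z ∈ ℂ`,
the 1-dimensional Hausdorff measure (arc length) of the intersection of the unit circle
with the annulus `A(z,r,δ) = {w : r ≤ |w−z| ≤ r+δ}` is at most `C·δ^{1/2}`. -/
theorem circle_annulus_length :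
    ∃ C : ℝ, 0 < C ∧ ∀ (z : ℂ) (r δ : ℝ), 0 < δ → δ ≤ r → r ≤ 0.001 →
      (μH[1] : Measure ℂ)
          ({w : ℂ | ‖w‖ = 1} ∩
            {w : ℂ | r ≤ ‖w - z‖ ∧ ‖w - z‖ ≤ r + δ})
        ≤ ENNReal.ofReal (C * δ ^ ((1 : ℝ) / 2)) := by
  refine ⟨13, by norm_num, fun z r δ hδ hδr hr => ?_⟩
  set S := {w : ℂ | ‖w‖ = 1} ∩
      {w : ℂ | r ≤ ‖w - z‖ ∧ ‖w - z‖ ≤ r + δ} with hS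
  rcases Set.eq_empty_or_nonempty S with hE | ⟨w₀, hw₀⟩
  · rw [hE]; simp
  have hπ := Real.pi_pos
  have hr0 : 0 < r := lt_of_lt_of_le hδ hδr
  -- |z| is close to 1
  set ρ : ℝ := ‖z‖ with hρdef
  have hρ : 0.9 ≤ ρ := by
    have h1 : ‖w₀‖ = 1 := hw₀.1
    have h2 : ‖w₀ - z‖ ≤ r + δ := hw₀.2.2
    have h3 : ‖w₀‖ ≤ ‖w₀ - z‖ + ‖z‖ := by
      calc ‖w₀‖ = ‖(w₀ - z) + z‖ := by ring_nf
        _ ≤ ‖w₀ - z‖ + ‖z‖ := norm_add_le _ _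
    rw [h1] at h3
    simp only [hρdef]
    linarith
  have hρ0 : (0:ℝ) < ρ := by linarith
  have hz0 : z ≠ 0 := by
    intro h
    rw [h, norm_zero] at hρdef
    exact absurd hρdef hρ0.ne'
  set ζ : ℂ := z / (ρ : ℂ) with hζ
  have hρC : (ρ : ℂ) ≠ 0 := by exact_mod_cast hρ0.ne'
  have hζabs : ‖ζ‖ = 1 := by
    rw [hζ, norm_div, Complex.norm_real, Real.norm_eq_abs, abs_of_pos hρ0, ← hρdef, div_self hρ0.ne']
  have hζ0 : ζ ≠ 0 := by
    intro h; rw [h] at hζabs; simp at hζabs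
  have hζρ : ζ * (ρ : ℂ) = z := by rw [hζ]; field_simp
  -- the rotated set
  set S' := {w : ℂ | ‖w‖ = 1} ∩
      {w : ℂ | r ≤ ‖w - (ρ:ℂ)‖ ∧ ‖w - (ρ:ℂ)‖ ≤ r + δ} with hS'
  have hrot : S ⊆ (fun w => ζ * w) '' S' := by
    intro w hw
    refine ⟨ζ⁻¹ * w, ⟨?_, ?_⟩, by field_simp⟩
    · rw [Set.mem_setOf_eq, norm_mul, norm_inv, hζabs, hw.1]; norm_num
    · have habs' : ‖ζ⁻¹ * w - (ρ:ℂ)‖ = ‖w - z‖ := by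
        calc ‖ζ⁻¹ * w - (ρ:ℂ)‖ = ‖ζ⁻¹ * (w - ζ * (ρ:ℂ))‖ := by
              congr 1; field_simp
          _ = ‖w - z‖ := by
              rw [norm_mul, norm_inv, hζabs, hζρ]; norm_num
      rw [Set.mem_setOf_eq, habs']; exact ⟨hw.2.1, hw.2.2⟩
  have hlip : LipschitzWith 1 (fun w : ℂ => ζ * w) := by
    apply LipschitzWith.of_dist_le_mul
    intro p q
    rw [Complex.dist_eq, Complex.dist_eq]
    have he : ζ * p - ζ * q = ζ * (p - q) := by ring
    rw [he, norm_mul, hζabs, one_mul, NNReal.coe_one, one_mul]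
  have step1 : (μH[1] : Measure ℂ) S ≤ (μH[1] : Measure ℂ) S' := by
    have himg := hlip.hausdorffMeasure_image_le (d := 1) (by norm_num) S'
    simp only [ENNReal.coe_one, ENNReal.one_rpow, one_mul] at himg
    exact le_trans (measure_mono hrot) himg
  -- parametrize by angle
  set a : ℝ := (1 + ρ^2 - (r+δ)^2) / (2*ρ) with ha
  set b : ℝ := (1 + ρ^2 - r^2) / (2*ρ) with hb
  set T := {θ : ℝ | θ ∈ Set.Icc (-Real.pi) Real.pi ∧ Real.cos θ ∈ Set.Icc a b} with hT
  have hTsub : S' ⊆ circleMap 0 1 '' T := by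
    intro w hw
    have hw1 : ‖w‖ = 1 := hw.1
    have hwne : w ≠ 0 := by
      intro h; rw [h] at hw1; simp at hw1
    set θ := Complex.arg w with hθ
    have hwθ : circleMap 0 1 θ = w := by
      have := Complex.norm_mul_exp_arg_mul_I w
      rw [hw1] at this
      simpa [circleMap] using this
    refine ⟨θ, ⟨?_, ?_⟩, hwθ⟩
    · have := Complex.arg_mem_Ioc w
      exact ⟨le_of_lt this.1, this.2⟩
    · have hcosθ : Real.cos θ = w.re := by
        rw [hθ, Complex.cos_arg hwne, hw1, div_one]
      have hXsq : ‖w - (ρ:ℂ)‖ ^ 2 = 1 + ρ^2 - 2*ρ*w.re := by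
        rw [Complex.sq_norm, Complex.normSq_apply]
        have hre : (w - (ρ:ℂ)).re = w.re - ρ := by simp
        have him : (w - (ρ:ℂ)).im = w.im := by simp
        rw [hre, him]
        have hnw : w.re * w.re + w.im * w.im = 1 := by
          have := Complex.sq_norm w
          rw [hw1, Complex.normSq_apply] at this
          nlinarith
        nlinarith
      have hX1 : r ≤ ‖w - (ρ:ℂ)‖ := hw.2.1
      have hX2 : ‖w - (ρ:ℂ)‖ ≤ r + δ := hw.2.2
      have hXnn : 0 ≤ ‖w - (ρ:ℂ)‖ := norm_nonneg _
      have hm1 : r * r ≤ ‖w - (ρ:ℂ)‖ * ‖w - (ρ:ℂ)‖ :=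
        mul_self_le_mul_self hr0.le hX1
      have hm2 : ‖w - (ρ:ℂ)‖ * ‖w - (ρ:ℂ)‖ ≤ (r+δ) * (r+δ) :=
        mul_self_le_mul_self hXnn hX2
      have hxx : ‖w - (ρ:ℂ)‖ * ‖w - (ρ:ℂ)‖ = 1 + ρ^2 - 2*ρ*w.re := by
        rw [← pow_two]; exact hXsq
      have hsq1 : r^2 ≤ 1 + ρ^2 - 2*ρ*w.re := by rw [pow_two]; linarith
      have hsq2 : 1 + ρ^2 - 2*ρ*w.re ≤ (r+δ)^2 := by rw [pow_two]; linarith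
      constructor
      · rw [ha, hcosθ, div_le_iff₀ (by positivity)]; linarith
      · rw [hb, hcosθ, le_div_iff₀ (by positivity)]; linarith
  have hlip2 : LipschitzWith 1 (circleMap 0 1) := by
    have := lipschitzWith_circleMap 0 1
    simpa using this
  have step2 : (μH[1] : Measure ℂ) S' ≤ volume T := by
    have himg := hlip2.hausdorffMeasure_image_le (d := 1) (by norm_num) T
    simp only [ENNReal.coe_one, ENNReal.one_rpow, one_mul] at himg
    refine le_trans (le_trans (measure_mono hTsub) himg) ?_
    rw [MeasureTheory.hausdorffMeasure_real]
  have step3 : volume T ≤ ENNReal.ofReal (4 * (Real.pi * Real.sqrt ((b - a) / 2))) :=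
    vol_cos_band a b
  have hba : (b - a) / 2 ≤ δ := by
    rw [ha, hb, div_sub_div_same]
    rw [div_div, div_le_iff₀ (by positivity)]
    nlinarith [hρ, hδr, hr, hδ.le]
  have hfinal : 4 * (Real.pi * Real.sqrt ((b - a) / 2)) ≤ 13 * δ ^ ((1:ℝ)/2) := by
    rw [← Real.sqrt_eq_rpow]
    have h1 : Real.sqrt ((b - a)/2) ≤ Real.sqrt δ := Real.sqrt_le_sqrt hba
    have h2 : Real.pi < 3.15 := by have := Real.pi_lt_d2; norm_num at this ⊢; linarith
    have h3 : 0 ≤ Real.sqrt δ := Real.sqrt_nonneg _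
    nlinarith [Real.sqrt_nonneg ((b-a)/2)]
  calc (μH[1] : Measure ℂ) S ≤ volume T := le_trans step1 step2
    _ ≤ ENNReal.ofReal (4 * (Real.pi * Real.sqrt ((b - a) / 2))) := step3
    _ ≤ ENNReal.ofReal (13 * δ ^ ((1:ℝ)/2)) := ENNReal.ofReal_le_ofReal hfinal
end

section
/- Let x, y be distinct points of S³ (null lines in ℙ²ℂ) and let w = κ(x∧y) ∈ ℂ³ be a representative of the pole of the projective line through x and y, where ⟨κ(u∧v), z⟩·(e₀∧e₁∧e₂) = u∧v∧z. Then ⟨w,w⟩/‖w‖² = −|⟨x,y⟩|²/‖x∧y‖², where ‖·‖ are the norms induced by the standard Hermitian inner product on ℂ³ and Λ²ℂ³. In particular ⟨w,w⟩ < 0, so the projective line through two distinct points of S³ always defines a chain. -/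
open scoped ComplexConjugate

/-- Squared Hermitian norm on ℂ³. -/
noncomputable def hnormSq (u : Fin 3 → ℂ) : ℝ := (cdot u u).re

/-- The signature (1,2) Hermitian form. -/
noncomputable def hform (u v : Fin 3 → ℂ) : ℂ :=
  u 0 * conj (v 0) - u 1 * conj (v 1) - u 2 * conj (v 2)

/-- The map `κ : Λ²ℂ³ → ℂ³` characterized by `⟨κ(x∧y), z⟩·(e₀∧e₁∧e₂) = x∧y∧z`,
written out explicitly in coordinates. -/
noncomputable def kappa (x y : Fin 3 → ℂ) : Fin 3 → ℂ :=
  ![conj (x 1 * y 2 - x 2 * y 1),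
    conj (x 0 * y 2 - x 2 * y 0),
    -conj (x 0 * y 1 - x 1 * y 0)]

/-- Lagrange-type identity for the signature (1,2) form: `κ` is an isometry from Λ²ℂ³
with the induced signature form to (ℂ³, ⟨·,·⟩). -/
lemma hform_kappa (x y : Fin 3 → ℂ) :
    hform (kappa x y) (kappa x y)
      = hform x x * hform y y - hform x y * hform y x := by
  simp only [hform, kappa, Matrix.cons_val_zero, Matrix.cons_val_one, Matrix.head_cons,
    Matrix.cons_val_two, Matrix.tail_cons, map_sub, map_mul, map_neg, Complex.conj_conj,
    neg_mul, mul_neg, neg_neg]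
  ring

/-- Lagrange identity for the standard Hermitian product: `κ` is an isometry from Λ²ℂ³
with the standard Hermitian product to (ℂ³, ·). -/
lemma cdot_kappa (x y : Fin 3 → ℂ) :
    cdot (kappa x y) (kappa x y) = cdot x x * cdot y y - cdot x y * cdot y x := by
  simp only [cdot, Fin.sum_univ_three, kappa, Matrix.cons_val_zero, Matrix.cons_val_one,
    Matrix.head_cons, Matrix.cons_val_two, Matrix.tail_cons, map_sub, map_mul, map_neg,
    Complex.conj_conj, neg_mul, mul_neg, neg_neg]
  ring

/-- The form `hform` is Hermitian. -/
lemma hform_conj (x y : Fin 3 → ℂ) : hform y x = conj (hform x y) := by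
  simp only [hform, map_sub, map_mul, Complex.conj_conj]
  ring

/-- A null vector with vanishing first coordinate is zero. -/
lemma null_zero (z : Fin 3 → ℂ) (h : hform z z = 0) (h0 : z 0 = 0) : z = 0 := by
  have h' : ((Complex.normSq (z 1) : ℂ) + Complex.normSq (z 2)) = 0 := by
    rw [← Complex.mul_conj, ← Complex.mul_conj]
    simp only [hform, h0] at h
    linear_combination -h
  have hr : Complex.normSq (z 1) + Complex.normSq (z 2) = 0 := by exact_mod_cast h'
  have n1 := Complex.normSq_nonneg (z 1)
  have n2 := Complex.normSq_nonneg (z 2)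
  have h1 : z 1 = 0 := Complex.normSq_eq_zero.mp (by linarith)
  have h2 : z 2 = 0 := Complex.normSq_eq_zero.mp (by linarith)
  funext i
  fin_cases i <;> simp [h0, h1, h2]

/-- Two linearly independent null vectors cannot be orthogonal for a signature (1,2)
form: there is no 2-dimensional totally isotropic subspace. -/
lemma hform_ne_zero (x y : Fin 3 → ℂ)
    (hx : hform x x = 0) (hy : hform y y = 0)
    (hind : LinearIndependent ℂ ![x, y]) : hform x y ≠ 0 := by
  intro h0
  have hyx : hform y x = 0 := by rw [hform_conj, h0, map_zero]
  have key : ((Complex.normSq (y 0 * x 1 - x 0 * y 1) : ℂ)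
      + Complex.normSq (y 0 * x 2 - x 0 * y 2)) = 0 := by
    rw [← Complex.mul_conj, ← Complex.mul_conj]
    simp only [hform, map_sub, map_mul, Complex.conj_conj] at hx hy h0 hyx
    simp only [map_sub, map_mul]
    linear_combination (-(y 0 * conj (y 0))) * hx - (x 0 * conj (x 0)) * hy
      + (y 0 * conj (x 0)) * h0 + (x 0 * conj (y 0)) * hyx
  have hr : Complex.normSq (y 0 * x 1 - x 0 * y 1)
      + Complex.normSq (y 0 * x 2 - x 0 * y 2) = 0 := by exact_mod_cast key
  have n1 := Complex.normSq_nonneg (y 0 * x 1 - x 0 * y 1)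
  have n2 := Complex.normSq_nonneg (y 0 * x 2 - x 0 * y 2)
  have a1 : y 0 * x 1 - x 0 * y 1 = 0 := Complex.normSq_eq_zero.mp (by linarith)
  have a2 : y 0 * x 2 - x 0 * y 2 = 0 := Complex.normSq_eq_zero.mp (by linarith)
  have hrel := (Fintype.linearIndependent_iff.mp hind) ![y 0, -(x 0)]
  have hsum : ∑ i, (![y 0, -(x 0)]) i • (![x, y]) i = 0 := by
    simp only [Fin.sum_univ_two, Matrix.cons_val_zero, Matrix.cons_val_one, Matrix.head_cons]
    funext j
    simp only [Pi.add_apply, Pi.smul_apply, Pi.neg_apply, Pi.zero_apply, smul_eq_mul,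
      neg_smul, neg_mul]
    fin_cases j
    · show y 0 * x 0 + -(x 0 * y 0) = 0; ring
    · show y 0 * x 1 + -(x 0 * y 1) = 0; linear_combination a1
    · show y 0 * x 2 + -(x 0 * y 2) = 0; linear_combination a2
  have g0 := hrel hsum 0
  have g1 := hrel hsum 1
  simp only [Matrix.cons_val_zero, Matrix.cons_val_one, Matrix.head_cons, neg_eq_zero] at g0 g1
  have hx0 : x = 0 := null_zero x hx g1
  exact hind.ne_zero 0 (by simp [hx0])

/-- For distinct points `x, y` of `S³` (null, linearly independent) and `w = κ(x∧y)`
(a representative of the pole of the projective line through `x` and `y`):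
`⟨w,w⟩/‖w‖² = −|⟨x,y⟩|²/‖x∧y‖²`; in particular `⟨w,w⟩ < 0`, so the projective line
through two distinct points of `S³` always defines a chain. -/
theorem pole_negative (x y : Fin 3 → ℂ)
    (hx : hform x x = 0) (hy : hform y y = 0)
    (hind : LinearIndependent ℂ ![x, y]) :
    (hform (kappa x y) (kappa x y)).re / hnormSq (kappa x y)
        = -(‖hform x y‖) ^ 2 / wedgeSq x y ∧
      (hform (kappa x y) (kappa x y)).re < 0 := by
  have hnz : hform x y ≠ 0 := hform_ne_zero x y hx hy hind
  have hA : hform (kappa x y) (kappa x y) = -(hform x y * conj (hform x y)) := by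
    rw [hform_kappa, hx, hy, hform_conj x y]; ring
  have hre : (hform (kappa x y) (kappa x y)).re = -(‖hform x y‖) ^ 2 := by
    rw [hA, Complex.mul_conj]
    simp [Complex.sq_norm]
  have hden : hnormSq (kappa x y) = wedgeSq x y := by
    unfold hnormSq wedgeSq
    rw [cdot_kappa]
  refine ⟨by rw [hre, hden], ?_⟩
  rw [hre]
  have hpos : 0 < ‖hform x y‖ := by
    simpa [norm_pos_iff] using hnz
  nlinarith
end

section
/- Fix w = [1 : w₁ : w₂] ∈ ℙ²ℂ with κ² := |w₁|² + |w₂|² > 1 and set υ = sqrt(κ² − 1). Then the map θ ↦ y_θ = [κ² : y₁ : y₂] with (y₁,y₂) = (w₁,w₂) + υ·e^{iθ}·(−\overline{w₂}, \overline{w₁}) is a parametrization of the chain L = w^⊥ ∩ S³: for every θ, ⟨y_θ, w⟩ = 0 and ⟨y_θ, y_θ⟩ = 0 (i.e. y_θ lies on S³ and on w^⊥). -/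
open scoped ComplexConjugate

/-- The parametrization `θ ↦ y_θ = (κ², (w₁,w₂) + υ e^{iθ}(−conj w₂, conj w₁))` of the
chain `w^⊥ ∩ S³` for `w = [1:w₁:w₂]`, `κ² = |w₁|²+|w₂|² > 1`, `υ = sqrt(κ²−1)`:
each `y_θ` lies on `w^⊥` and on `S³`. -/
theorem chain_parametrization (w₁ w₂ : ℂ) (θ : ℝ)
    (hκ : 1 < ‖w₁‖ ^ 2 + ‖w₂‖ ^ 2) :
    hform
        ![((‖w₁‖ ^ 2 + ‖w₂‖ ^ 2 : ℝ) : ℂ),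
          w₁ + (Real.sqrt (‖w₁‖ ^ 2 + ‖w₂‖ ^ 2 - 1) : ℂ)
              * Complex.exp (θ * Complex.I) * (-(conj w₂)),
          w₂ + (Real.sqrt (‖w₁‖ ^ 2 + ‖w₂‖ ^ 2 - 1) : ℂ)
              * Complex.exp (θ * Complex.I) * conj w₁]
        ![1, w₁, w₂] = 0 ∧
    hform
        ![((‖w₁‖ ^ 2 + ‖w₂‖ ^ 2 : ℝ) : ℂ),
          w₁ + (Real.sqrt (‖w₁‖ ^ 2 + ‖w₂‖ ^ 2 - 1) : ℂ)
              * Complex.exp (θ * Complex.I) * (-(conj w₂)),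
          w₂ + (Real.sqrt (‖w₁‖ ^ 2 + ‖w₂‖ ^ 2 - 1) : ℂ)
              * Complex.exp (θ * Complex.I) * conj w₁]
        ![((‖w₁‖ ^ 2 + ‖w₂‖ ^ 2 : ℝ) : ℂ),
          w₁ + (Real.sqrt (‖w₁‖ ^ 2 + ‖w₂‖ ^ 2 - 1) : ℂ)
              * Complex.exp (θ * Complex.I) * (-(conj w₂)),
          w₂ + (Real.sqrt (‖w₁‖ ^ 2 + ‖w₂‖ ^ 2 - 1) : ℂ)
              * Complex.exp (θ * Complex.I) * conj w₁] = 0 := by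

  set a : ℂ := (‖w₁‖ : ℂ) ^ 2 with ha
  set b : ℂ := (‖w₂‖ : ℂ) ^ 2 with hb
  set υ : ℂ := ((Real.sqrt (‖w₁‖ ^ 2 + ‖w₂‖ ^ 2 - 1) : ℝ) : ℂ) with hυ
  set e : ℂ := Complex.exp (θ * Complex.I) with hee
  have hs : υ ^ 2 = a + b - 1 := by
    rw [hυ, ← Complex.ofReal_pow, Real.sq_sqrt (by linarith)]
    push_cast [ha, hb]; ring
  have h1 : w₁ * conj w₁ = a := by
    rw [Complex.mul_conj, Complex.normSq_eq_norm_sq, ha]; push_cast; ring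
  have h2 : w₂ * conj w₂ = b := by
    rw [Complex.mul_conj, Complex.normSq_eq_norm_sq, hb]; push_cast; ring
  have he : e * conj e = 1 := by
    rw [hee, Complex.mul_conj, Complex.normSq_eq_norm_sq, Complex.norm_exp_ofReal_mul_I]; norm_num
  constructor <;>
  · simp only [hform, Matrix.cons_val_zero, Matrix.cons_val_one, Matrix.head_cons,
      Matrix.cons_val_two, Matrix.tail_cons, map_add, map_mul, map_neg, map_one,
      Complex.conj_conj, Complex.conj_ofReal]
    have hcυ : conj υ = υ := by rw [hυ]; exact Complex.conj_ofReal _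
    push_cast
    try simp only [hcυ]
    first
    | linear_combination -h1 - h2
    | linear_combination (-(1 + υ^2 * (e * conj e))) * h1 + (-(1 + υ^2 * (e * conj e))) * h2
        + (-(a + b) * υ^2) * he + (-(a + b)) * hs
end

section
/- With the parametrization y_θ of the chain w^⊥ ∩ S³ (where w = [1:w₁:w₂], κ² = |w₁|²+|w₂|² > 1, υ = sqrt(κ²−1), y_θ = [κ² : (w₁,w₂) + υe^{iθ}(−\overline{w₂},\overline{w₁})]) and x = [1:1:0] ∈ S³, the visual distance satisfies d(x, y_θ)² = (|w₂|·υ)/(2κ²) · |e^{iθ} − z|, where z = (w₁ − κ²)/(\overline{w₂}·υ), assuming w₂ ≠ 0. -/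
open scoped ComplexConjugate

/-- The visual distance `d(u,v) = sqrt(|⟨u,v⟩|/(‖u‖‖v‖))` on representatives. -/
noncomputable def vd (u v : Fin 3 → ℂ) : ℝ :=
  Real.sqrt (‖hform u v‖ / (hnorm u * hnorm v))

/-- With the parametrization `y_θ` of the chain `w^⊥ ∩ S³` and `x = [1:1:0] ∈ S³`:
`d(x, y_θ)² = (|w₂|·υ)/(2κ²) · |e^{iθ} − z|` where `z = (w₁ − κ²)/(conj w₂ · υ)`. -/
theorem visual_dist_on_chain (w₁ w₂ : ℂ) (θ : ℝ)
    (hκ : 1 < ‖w₁‖ ^ 2 + ‖w₂‖ ^ 2) (hw₂ : w₂ ≠ 0)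
    (κsq υ : ℝ) (hκsq : κsq = ‖w₁‖ ^ 2 + ‖w₂‖ ^ 2)
    (hυ : υ = Real.sqrt (κsq - 1))
    (y : Fin 3 → ℂ)
    (hy : y = ![(κsq : ℂ),
        w₁ + (υ : ℂ) * Complex.exp (θ * Complex.I) * (-(conj w₂)),
        w₂ + (υ : ℂ) * Complex.exp (θ * Complex.I) * conj w₁])
    (z : ℂ) (hz : z = (w₁ - (κsq : ℂ)) / (conj w₂ * (υ : ℂ))) :
    vd ![1, 1, 0] y ^ 2
      = (‖w₂‖ * υ) / (2 * κsq)
          * ‖Complex.exp (θ * Complex.I) - z‖ := by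
  have hκpos : (1:ℝ) < κsq := hκsq ▸ hκ
  have hκ0 : (0:ℝ) < κsq := lt_trans one_pos hκpos
  have hυ2 : υ ^ 2 = κsq - 1 := by
    rw [hυ, Real.sq_sqrt (by linarith)]
  have hυpos : 0 < υ := by
    rw [hυ]; exact Real.sqrt_pos.mpr (by linarith)
  set e := Complex.exp (θ * Complex.I) with he
  have hce : conj e = Complex.exp (-(θ * Complex.I)) := by
    rw [he, ← Complex.exp_conj]
    congr 1
    simp [Complex.conj_I]
  have hee : e * conj e = 1 := by
    rw [hce, he, ← Complex.exp_add, add_neg_cancel, Complex.exp_zero]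
  have hnormsum : w₁ * conj w₁ + w₂ * conj w₂ = (κsq : ℂ) := by
    rw [Complex.mul_conj, Complex.mul_conj, hκsq]
    push_cast [Complex.sq_norm]
    ring
  -- hform
  have hf : hform ![1,1,0] y = (κsq : ℂ) - conj w₁ + (υ : ℂ) * conj e * w₂ := by
    simp [hform, hy, Complex.conj_ofReal]
    ring
  -- abs of hform equals |w₂| υ |e - z|
  have hw₂' : (conj w₂ : ℂ) ≠ 0 := by simpa using hw₂
  have hυc : ((υ : ℂ)) ≠ 0 := by exact_mod_cast hυpos.ne'
  have habs : ‖hform ![1,1,0] y‖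
      = ‖w₂‖ * υ * ‖e - z‖ := by
    have h1 : e - z = (conj w₂ * (υ:ℂ) * e - (w₁ - (κsq:ℂ))) / (conj w₂ * (υ:ℂ)) := by
      rw [hz]; field_simp
    have h3 : ‖((υ:ℂ))‖ = υ := by
      rw [Complex.norm_real, Real.norm_eq_abs, abs_of_pos hυpos]
    have h4 : (κsq : ℂ) - conj w₁ + (υ : ℂ) * conj e * w₂
        = conj (conj w₂ * (υ:ℂ) * e - (w₁ - (κsq:ℂ))) := by
      simp [map_mul, Complex.conj_ofReal]
      ring
    have key : ‖conj w₂ * (υ:ℂ)‖ = ‖w₂‖ * υ := by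
      rw [norm_mul, Complex.norm_conj, h3]
    have hpos : ‖w₂‖ * υ ≠ 0 := by
      have := norm_pos_iff.mpr hw₂
      positivity
    rw [hf, h4, Complex.norm_conj, h1, norm_div, key]
    field_simp
  -- hnorm x
  have hnx : hnorm ![1,1,0] = Real.sqrt 2 := by
    have h2 : cdot ![1,1,0] ![1,1,0] = 2 := by
      norm_num [cdot, Fin.sum_univ_three]
      rfl
    rw [hnorm, h2]
    norm_num
  -- cdot y y
  have hcy : cdot y y = (2 * κsq ^ 2 : ℝ) := by
    have hυ2c : ((υ:ℂ)) ^ 2 = (κsq : ℂ) - 1 := by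
      rw [← Complex.ofReal_pow, hυ2]; push_cast; ring
    simp only [cdot, hy, Fin.sum_univ_three]
    simp only [Matrix.cons_val_zero, Matrix.cons_val_one, Matrix.head_cons,
      Matrix.cons_val_two, Matrix.tail_cons, map_add, map_mul, map_neg,
      Complex.conj_conj, Complex.conj_ofReal]
    push_cast
    linear_combination (1 + (υ:ℂ)^2) * hnormsum
      + (υ:ℂ)^2 * (w₁ * conj w₁ + w₂ * conj w₂) * hee
      + (κsq:ℂ) * hυ2c
  have hny : hnorm y = Real.sqrt (2 * κsq ^ 2) := by
    rw [hnorm, hcy, Complex.ofReal_re]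
  -- product of norms
  have hprod : hnorm ![1,1,0] * hnorm y = 2 * κsq := by
    rw [hnx, hny, ← Real.sqrt_mul (by norm_num)]
    have h5 : (2:ℝ) * (2 * κsq ^ 2) = (2 * κsq) ^ 2 := by ring
    rw [h5, Real.sqrt_sq (by positivity)]
  -- finish
  rw [vd, hprod, habs, Real.sq_sqrt (by positivity)]
  ring
end
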